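/- Let (X,Σ,m) be a σ-finite measure space and P a stochastic operator on L¹ = L¹(X,Σ,m). The discrete-time semigroup of iterates of P is asymptotically stable (there exists a density f* with lim_{n→∞} ‖Pⁿf − f*‖₁ = 0 for every density f) if and only if P has a lower function, i.e. there exists h ∈ L¹ with h ≥ 0, h ≠ 0, and lim_{n→∞} ‖(Pⁿf − h)⁻‖₁ = 0 for every density f, where g⁻ denotes the negative part max(0,−g). -/

import Mathlib

open MeasureTheory Filter

/-- A stochastic (Markov) operator on `L¹(X,Σ,m)`. -/
def IsStochasticOperator {X : Type*} [MeasurableSpace X] (m : Measure X)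
    (P : Lp ℝ 1 m →L[ℝ] Lp ℝ 1 m) : Prop :=
  (∀ f : Lp ℝ 1 m, 0 ≤ f → 0 ≤ P f) ∧
  (∀ f : Lp ℝ 1 m, ∫ x, (P f : X → ℝ) x ∂m = ∫ x, (f : X → ℝ) x ∂m)

/-- A density: a nonnegative element of `L¹` of norm one. -/
def IsDensity {X : Type*} [MeasurableSpace X] (m : Measure X) (f : Lp ℝ 1 m) : Prop :=
  0 ≤ f ∧ ‖f‖ = 1

namespace LYAux

variable {X : Type*} [MeasurableSpace X] {m : Measure X}

/-- The integral of an `L¹` element. -/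
noncomputable def intg (f : Lp ℝ 1 m) : ℝ := ∫ x, (f : X → ℝ) x ∂m

lemma intg_add (f g : Lp ℝ 1 m) : intg (f + g) = intg f + intg g := by
  unfold intg
  rw [integral_congr_ae (Lp.coeFn_add f g)]
  simpa using integral_add (L1.integrable_coeFn f) (L1.integrable_coeFn g)

lemma intg_sub (f g : Lp ℝ 1 m) : intg (f - g) = intg f - intg g := by
  unfold intg
  rw [integral_congr_ae (Lp.coeFn_sub f g)]
  simpa using integral_sub (L1.integrable_coeFn f) (L1.integrable_coeFn g)

lemma intg_smul (c : ℝ) (f : Lp ℝ 1 m) : intg (c • f) = c * intg f := by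
  unfold intg
  rw [integral_congr_ae (Lp.coeFn_smul c f)]
  simpa using integral_smul c (fun x => (f : X → ℝ) x)

lemma intg_mono {f g : Lp ℝ 1 m} (h : f ≤ g) : intg f ≤ intg g :=
  integral_mono_ae (L1.integrable_coeFn f) (L1.integrable_coeFn g)
    ((Lp.coeFn_le f g).mpr h)

lemma norm_intg {f : Lp ℝ 1 m} (hf : 0 ≤ f) : ‖f‖ = intg f := by
  rw [L1.norm_eq_integral_norm]
  refine integral_congr_ae ?_
  filter_upwards [(Lp.coeFn_nonneg f).mpr hf] with x hx
  exact Real.norm_of_nonneg hx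

lemma norm_mono' {a b : Lp ℝ 1 m} (ha : 0 ≤ a) (h : a ≤ b) : ‖a‖ ≤ ‖b‖ := by
  rw [norm_intg ha, norm_intg (ha.trans h)]
  exact intg_mono h

lemma negPart_le' {x w : Lp ℝ 1 m} (h : -x ≤ w) (hw : 0 ≤ w) : x⁻ ≤ w := by
  rw [negPart_def]; exact sup_le h hw

lemma negPart_le_abs' (g : Lp ℝ 1 m) : g⁻ ≤ |g| := by
  calc g⁻ ≤ g⁺ + g⁻ := le_add_of_nonneg_left (posPart_nonneg g)
    _ = |g| := posPart_add_negPart g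

lemma norm_negPart_le (g : Lp ℝ 1 m) : ‖g⁻‖ ≤ ‖g‖ := by
  rw [← norm_abs_eq_norm g]
  exact norm_mono' (negPart_nonneg g) (negPart_le_abs' g)

lemma norm_eq_intg_add (g : Lp ℝ 1 m) : ‖g‖ = intg g + 2 * ‖g⁻‖ := by
  have h1 : |g| = g + (g⁻ + g⁻) := by
    have h2 : g⁺ = g + g⁻ := by
      have := posPart_sub_negPart g
      rw [sub_eq_iff_eq_add] at this
      exact this
    rw [← posPart_add_negPart g, h2]
    abel
  rw [← norm_abs_eq_norm g, norm_intg (abs_nonneg g), h1, intg_add, intg_add,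
    norm_intg (negPart_nonneg g)]
  ring

variable {P : Lp ℝ 1 m →L[ℝ] Lp ℝ 1 m}

lemma stoch_pow (hP : IsStochasticOperator m P) (n : ℕ) :
    IsStochasticOperator m (P ^ n) := by
  induction n with
  | zero =>
    constructor
    · intro f hf; simpa using hf
    · intro f; simp
  | succ n ih =>
    rw [pow_succ]
    constructor
    · intro f hf
      rw [ContinuousLinearMap.mul_apply]
      exact ih.1 _ (hP.1 f hf)
    · intro f
      rw [ContinuousLinearMap.mul_apply]
      rw [ih.2, hP.2]

lemma intg_stoch (hP : IsStochasticOperator m P) (f : Lp ℝ 1 m) :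
    intg (P f) = intg f := hP.2 f

lemma intg_pow (hP : IsStochasticOperator m P) (n : ℕ) (f : Lp ℝ 1 m) :
    intg ((P ^ n) f) = intg f := (stoch_pow hP n).2 f

lemma smul_nn {c : ℝ} (hc : 0 ≤ c) {f : Lp ℝ 1 m} (hf : 0 ≤ f) : 0 ≤ c • f := by
  rw [← Lp.coeFn_nonneg] at hf ⊢
  filter_upwards [Lp.coeFn_smul c f, hf] with x h1 h2
  simp only [Pi.zero_apply] at h2 ⊢
  rw [h1]
  simpa using mul_nonneg hc h2

lemma smul_mono_left {c : ℝ} (hc : 0 ≤ c) {f g : Lp ℝ 1 m} (h : f ≤ g) :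
    c • f ≤ c • g := by
  have := smul_nn hc (sub_nonneg.2 h)
  rw [smul_sub] at this
  exact sub_nonneg.1 this

lemma smul_mono_r {c d : ℝ} (h : c ≤ d) {f : Lp ℝ 1 m} (hf : 0 ≤ f) :
    c • f ≤ d • f := by
  have := smul_nn (sub_nonneg.2 h) hf
  rw [sub_smul] at this
  exact sub_nonneg.1 this

/-- A lower function for `P` (possibly zero). -/
def LowerFn (m : Measure X) (P : Lp ℝ 1 m →L[ℝ] Lp ℝ 1 m) (h : Lp ℝ 1 m) : Prop :=
  0 ≤ h ∧ ∀ f : Lp ℝ 1 m, IsDensity m f →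
    Tendsto (fun n : ℕ => ‖((P ^ n) f - h)⁻‖) atTop (nhds 0)

lemma tendsto0_of_eps {u : ℕ → ℝ} (h0 : ∀ n, 0 ≤ u n)
    (h : ∀ ε > (0:ℝ), ∃ N, ∀ n ≥ N, u n ≤ ε) : Tendsto u atTop (nhds 0) := by
  rw [Metric.tendsto_atTop]
  intro ε hε
  obtain ⟨N, hN⟩ := h (ε/2) (by positivity)
  refine ⟨N, fun n hn => ?_⟩
  rw [dist_zero_right, Real.norm_eq_abs, abs_of_nonneg (h0 n)]
  exact lt_of_le_of_lt (hN n hn) (by linarith)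

lemma eps_of_tendsto0 {u : ℕ → ℝ} (h : Tendsto u atTop (nhds 0)) :
    ∀ ε > (0:ℝ), ∃ N, ∀ n ≥ N, u n ≤ ε := by
  intro ε hε
  obtain ⟨N, hN⟩ := (Metric.tendsto_atTop).1 h ε hε
  refine ⟨N, fun n hn => ?_⟩
  have := hN n hn
  rw [dist_zero_right, Real.norm_eq_abs] at this
  exact le_of_lt (lt_of_le_of_lt (le_abs_self _) this)

lemma LF_sup {h₁ h₂ : Lp ℝ 1 m} (H1 : LowerFn m P h₁) (H2 : LowerFn m P h₂) :
    LowerFn m P (h₁ ⊔ h₂) := by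
  refine ⟨le_trans H1.1 le_sup_left, fun f hf => ?_⟩
  refine squeeze_zero (fun n => norm_nonneg _) (fun n => ?_)
    (by simpa only [add_zero] using (H1.2 f hf).add (H2.2 f hf))
  set g := (P ^ n) f with hg
  have key : (g - h₁ ⊔ h₂)⁻ ≤ (g - h₁)⁻ + (g - h₂)⁻ := by
    refine negPart_le' ?_ (add_nonneg (negPart_nonneg _) (negPart_nonneg _))
    rw [neg_sub, sub_le_iff_le_add]
    refine sup_le ?_ ?_
    · rw [← sub_le_iff_le_add]
      have e1 : h₁ - g ≤ (g - h₁)⁻ := by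
        have := neg_le_negPart (g - h₁); rwa [neg_sub] at this
      exact e1.trans (le_add_of_nonneg_right (negPart_nonneg _))
    · rw [← sub_le_iff_le_add]
      have e1 : h₂ - g ≤ (g - h₂)⁻ := by
        have := neg_le_negPart (g - h₂); rwa [neg_sub] at this
      exact e1.trans (le_add_of_nonneg_left (negPart_nonneg _))
  calc ‖(g - h₁ ⊔ h₂)⁻‖ ≤ ‖(g - h₁)⁻ + (g - h₂)⁻‖ :=
        norm_mono' (negPart_nonneg _) key
    _ ≤ ‖(g - h₁)⁻‖ + ‖(g - h₂)⁻‖ := norm_add_le _ _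

lemma LF_limit {hk : ℕ → Lp ℝ 1 m} {h : Lp ℝ 1 m}
    (H1 : ∀ k, LowerFn m P (hk k)) (H2 : ∀ k, hk k ≤ h)
    (H3 : Tendsto (fun k => ‖h - hk k‖) atTop (nhds 0)) : LowerFn m P h := by
  refine ⟨(H1 0).1.trans (H2 0), fun f hf => ?_⟩
  refine tendsto0_of_eps (fun n => norm_nonneg _) ?_
  intro ε hε
  obtain ⟨k, hk'⟩ := eps_of_tendsto0 H3 (ε/2) (by linarith)
  have hkε : ‖h - hk k‖ ≤ ε/2 := hk' k le_rfl
  obtain ⟨N, hN⟩ := eps_of_tendsto0 ((H1 k).2 f hf) (ε/2) (by linarith)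
  refine ⟨N, fun n hn => ?_⟩
  set g := (P ^ n) f with hg
  have key : (g - h)⁻ ≤ (g - hk k)⁻ + |h - hk k| := by
    refine negPart_le' ?_ (add_nonneg (negPart_nonneg _) (abs_nonneg _))
    have e0 : -(g - h) = (hk k - g) + (h - hk k) := by abel
    rw [e0]
    have e1 : hk k - g ≤ (g - hk k)⁻ := by
      have := neg_le_negPart (g - hk k); rwa [neg_sub] at this
    exact add_le_add e1 (le_abs_self _)
  calc ‖(g - h)⁻‖ ≤ ‖(g - hk k)⁻ + |h - hk k|‖ := norm_mono' (negPart_nonneg _) key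
    _ ≤ ‖(g - hk k)⁻‖ + ‖|h - hk k|‖ := norm_add_le _ _
    _ = ‖(g - hk k)⁻‖ + ‖h - hk k‖ := by rw [norm_abs_eq_norm]
    _ ≤ ε/2 + ε/2 := add_le_add (hN n hn) hkε
    _ = ε := by ring

lemma negPart_apply_norm_le (hP : IsStochasticOperator m P) (g : Lp ℝ 1 m) :
    ‖(P g)⁻‖ ≤ ‖g⁻‖ := by
  have h1 : (P g)⁻ ≤ P (g⁻) := by
    refine negPart_le' ?_ (hP.1 _ (negPart_nonneg g))
    have e1 : P (g⁺ - g⁻) = P g := by rw [posPart_sub_negPart]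
    rw [map_sub] at e1
    have h2 : (0 : Lp ℝ 1 m) ≤ P (g⁺) := hP.1 _ (posPart_nonneg g)
    calc -P g = P (g⁻) - P (g⁺) := by rw [← e1]; abel
      _ ≤ P (g⁻) := sub_le_self _ h2
  calc ‖(P g)⁻‖ ≤ ‖P (g⁻)‖ := norm_mono' (negPart_nonneg _) h1
    _ = intg (P (g⁻)) := norm_intg (hP.1 _ (negPart_nonneg g))
    _ = intg (g⁻) := hP.2 _
    _ = ‖g⁻‖ := (norm_intg (negPart_nonneg g)).symm

lemma dens_intg {f : Lp ℝ 1 m} (hf : IsDensity m f) : intg f = 1 := by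
  rw [← norm_intg hf.1]; exact hf.2

lemma intg_pow_dens (hP : IsStochasticOperator m P) {f : Lp ℝ 1 m}
    (hf : IsDensity m f) (n : ℕ) : intg ((P ^ n) f) = 1 := by
  rw [intg_pow hP]; exact dens_intg hf

end LYAux

open LYAux

set_option maxHeartbeats 2000000 in
/-- **The lower function theorem of Lasota and Yorke (discrete time).**
The semigroup of iterates of a stochastic operator `P` on `L¹(X,Σ,m)` of a σ-finite measure
space is asymptotically stable (i.e. there is a density `f*` with `‖Pⁿf − f*‖₁ → 0` for every
density `f`) if and only if `P` admits a lower function: an `h ∈ L¹`, `h ≥ 0`, `h ≠ 0`, such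
that `‖(Pⁿf − h)⁻‖₁ → 0` for every density `f`. -/
theorem lower_function_theorem_discrete
    {X : Type*} [MeasurableSpace X] (m : Measure X) [SigmaFinite m]
    (P : Lp ℝ 1 m →L[ℝ] Lp ℝ 1 m) (hP : IsStochasticOperator m P) :
    (∃ fstar : Lp ℝ 1 m, IsDensity m fstar ∧
      ∀ f : Lp ℝ 1 m, IsDensity m f →
        Tendsto (fun n : ℕ => ‖(P ^ n) f - fstar‖) atTop (nhds 0)) ↔
    (∃ h : Lp ℝ 1 m, 0 ≤ h ∧ h ≠ 0 ∧
      ∀ f : Lp ℝ 1 m, IsDensity m f →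
        Tendsto (fun n : ℕ => ‖((P ^ n) f - h)⁻‖) atTop (nhds 0)) := by
  constructor
  · rintro ⟨fs, hfs, hconv⟩
    refine ⟨fs, hfs.1, ?_, fun f hf => ?_⟩
    · intro h0
      have h1 := hfs.2
      rw [h0, norm_zero] at h1
      exact one_ne_zero h1.symm
    · exact squeeze_zero (fun n => norm_nonneg _) (fun n => norm_negPart_le _)
        (hconv f hf)
  · rintro ⟨h₀, h₀nn, h₀ne, h₀conv⟩
    have h₀LF : LowerFn m P h₀ := ⟨h₀nn, h₀conv⟩
    have h₀pos : 0 < ‖h₀‖ := norm_pos_iff.mpr h₀ne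
    -- a canonical density
    set f₀ : Lp ℝ 1 m := ‖h₀‖⁻¹ • h₀ with hf₀def
    have hf₀ : IsDensity m f₀ := by
      constructor
      · exact smul_nn (inv_nonneg.2 h₀pos.le) h₀nn
      · rw [hf₀def, norm_smul, Real.norm_eq_abs, abs_of_pos (inv_pos.2 h₀pos),
          inv_mul_cancel₀ h₀pos.ne']
    -- all lower functions have norm ≤ 1
    have hub : ∀ h : Lp ℝ 1 m, LowerFn m P h → ‖h‖ ≤ 1 := by
      intro h hh
      refine le_of_forall_pos_le_add ?_
      intro ε hε
      obtain ⟨N, hN⟩ := eps_of_tendsto0 (hh.2 f₀ hf₀) ε hε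
      have e1 : h - (P ^ N) f₀ ≤ ((P ^ N) f₀ - h)⁻ := by
        have := neg_le_negPart ((P ^ N) f₀ - h); rwa [neg_sub] at this
      have e2 := intg_mono e1
      rw [intg_sub] at e2
      have e3 : intg (((P ^ N) f₀ - h)⁻) = ‖((P ^ N) f₀ - h)⁻‖ :=
        (norm_intg (negPart_nonneg _)).symm
      have e4 := hN N le_rfl
      have e5 : intg ((P ^ N) f₀) = 1 := intg_pow_dens hP hf₀ N
      rw [norm_intg hh.1]
      linarith
    set S : Set ℝ := (fun h : Lp ℝ 1 m => ‖h‖) '' {h | LowerFn m P h} with hS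
    have hSne : S.Nonempty := ⟨‖h₀‖, ⟨h₀, h₀LF, rfl⟩⟩
    have hbdd : BddAbove S := ⟨1, by rintro r ⟨h, hh, rfl⟩; exact hub h hh⟩
    set α := sSup S with hα
    have hαle : ∀ h : Lp ℝ 1 m, LowerFn m P h → ‖h‖ ≤ α :=
      fun h hh => le_csSup hbdd ⟨h, hh, rfl⟩
    have hαpos : 0 < α := lt_of_lt_of_le h₀pos (hαle h₀ h₀LF)
    have hα1 : α ≤ 1 := csSup_le hSne (by rintro r ⟨h, hh, rfl⟩; exact hub h hh)
    obtain ⟨r, hrmono, hrtend, hrmem⟩ := exists_seq_tendsto_sSup hSne hbdd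
    choose hs hsLF hsnorm using hrmem
    have hsnorm' : ∀ n, ‖hs n‖ = r n := hsnorm
    -- running suprema
    set H : ℕ → Lp ℝ 1 m :=
      fun n => Nat.rec (hs 0) (fun k ih => ih ⊔ hs (k + 1)) n with hHdef
    have Hsucc : ∀ n, H (n + 1) = H n ⊔ hs (n + 1) := fun n => rfl
    have Hzero : H 0 = hs 0 := rfl
    clear_value H
    have HLF : ∀ n, LowerFn m P (H n) := by
      intro n
      induction n with
      | zero => rw [Hzero]; exact hsLF 0
      | succ k ih => rw [Hsucc]; exact LF_sup ih (hsLF (k + 1))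
    have Hmono : Monotone H :=
      monotone_nat_of_le_succ fun n => by rw [Hsucc]; exact le_sup_left
    have Hge : ∀ n, hs n ≤ H n := by
      intro n
      cases n with
      | zero => rw [Hzero]
      | succ k => rw [Hsucc]; exact le_sup_right
    have Hnormle : ∀ n, ‖H n‖ ≤ α := fun n => hαle _ (HLF n)
    have Hnormge : ∀ n, r n ≤ ‖H n‖ := fun n =>
      (hsnorm' n) ▸ norm_mono' (hsLF n).1 (Hge n)
    have Hnormt : Tendsto (fun n => ‖H n‖) atTop (nhds α) :=
      tendsto_of_tendsto_of_tendsto_of_le_of_le hrtend tendsto_const_nhds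
        Hnormge Hnormle
    -- Cauchy
    have hdist : ∀ a b, a ≤ b → dist (H a) (H b) = ‖H b‖ - ‖H a‖ := by
      intro a b hab
      rw [dist_comm, dist_eq_norm, norm_intg (sub_nonneg.2 (Hmono hab)), intg_sub,
        norm_intg (HLF b).1, norm_intg (HLF a).1]
    have HC : CauchySeq H := by
      rw [Metric.cauchySeq_iff]
      intro ε hε
      obtain ⟨N, hN⟩ := Metric.cauchySeq_iff.1 Hnormt.cauchySeq ε hε
      refine ⟨N, fun a ha b hb => ?_⟩
      rcases le_total a b with hab | hab
      · rw [hdist a b hab]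
        have := hN b hb a ha
        rw [Real.dist_eq] at this
        exact lt_of_le_of_lt (le_abs_self _) this
      · rw [dist_comm, hdist b a hab]
        have := hN a ha b hb
        rw [Real.dist_eq] at this
        exact lt_of_le_of_lt (le_abs_self _) this
    obtain ⟨hstar, hstar_t⟩ := cauchySeq_tendsto_of_complete HC
    have hstar_norm : ‖hstar‖ = α := tendsto_nhds_unique hstar_t.norm Hnormt
    have Hle_star : ∀ k, H k ≤ hstar := fun k =>
      ge_of_tendsto hstar_t (eventually_atTop.2 ⟨k, fun n hn => Hmono hn⟩)
    have hstar_LF : LowerFn m P hstar := by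
      refine LF_limit HLF Hle_star ?_
      have := tendsto_iff_dist_tendsto_zero.1 hstar_t
      refine this.congr fun n => ?_
      rw [dist_comm, dist_eq_norm]
    -- P hstar = hstar
    have hPstar_LF : LowerFn m P (P hstar) := by
      refine ⟨hP.1 hstar hstar_LF.1, fun f hf => ?_⟩
      rw [← tendsto_add_atTop_iff_nat 1]
      refine squeeze_zero (fun n => norm_nonneg _) (fun n => ?_) (hstar_LF.2 f hf)
      have e : (P ^ (n + 1)) f - P hstar = P ((P ^ n) f - hstar) := by
        rw [pow_succ', ContinuousLinearMap.mul_apply, map_sub]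
      rw [e]
      exact negPart_apply_norm_le hP _
    have hsup_LF := LF_sup hstar_LF hPstar_LF
    have h1 : ‖hstar ⊔ P hstar‖ = α :=
      le_antisymm (hαle _ hsup_LF) (hstar_norm ▸ norm_mono' hstar_LF.1 le_sup_left)
    have h2 : hstar ⊔ P hstar = hstar := by
      have hnn : (0 : Lp ℝ 1 m) ≤ hstar ⊔ P hstar - hstar := sub_nonneg.2 le_sup_left
      have e1 : ‖hstar ⊔ P hstar - hstar‖ = 0 := by
        rw [norm_intg hnn, intg_sub, ← norm_intg hsup_LF.1, ← norm_intg hstar_LF.1,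
          h1, hstar_norm]
        ring
      exact sub_eq_zero.1 (norm_eq_zero.1 e1)
    have hPle : P hstar ≤ hstar := sup_eq_left.1 h2
    have hfix : P hstar = hstar := by
      have hnn : (0 : Lp ℝ 1 m) ≤ hstar - P hstar := sub_nonneg.2 hPle
      have e1 : ‖hstar - P hstar‖ = 0 := by
        rw [norm_intg hnn, intg_sub, intg_stoch hP]
        ring
      have := norm_eq_zero.1 e1
      have := sub_eq_zero.1 this
      exact this.symm
    have hfixn : ∀ k, (P ^ k) hstar = hstar := by
      intro k
      induction k with
      | zero => simp
      | succ k ih => rw [pow_succ', ContinuousLinearMap.mul_apply, ih, hfix]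
    -- α = 1
    have hα_eq : α = 1 := by
      by_contra hne
      have hαlt : α < 1 := lt_of_le_of_ne hα1 hne
      set c : ℝ := 2 - α with hc
      clear_value c
      have hC : LowerFn m P (c • hstar) := by
        refine ⟨smul_nn (by linarith) hstar_LF.1, fun f hf => ?_⟩
        refine tendsto0_of_eps (fun n => norm_nonneg _) ?_
        intro ε hε
        obtain ⟨N₀, hN₀⟩ := eps_of_tendsto0 (hstar_LF.2 f hf) (min (ε/4) 1)
          (lt_min (by linarith) one_pos)
        set g := (P ^ N₀) f with hgdef
        set p := (g - hstar)⁺ with hpdef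
        set q := (g - hstar)⁻ with hqdef
        have hqnn : (0 : Lp ℝ 1 m) ≤ q := negPart_nonneg _
        have hp_nn : (0 : Lp ℝ 1 m) ≤ p := posPart_nonneg _
        have hqε : ‖q‖ ≤ min (ε/4) 1 := hN₀ N₀ le_rfl
        have hgid : g = hstar + p - q := by
          have e0 := posPart_sub_negPart (g - hstar)
          rw [hpdef, hqdef, add_sub_assoc, e0]
          abel
        have hpq : p = (g - hstar) + q := by
          rw [hpdef, hqdef]
          exact eq_add_of_sub_eq (posPart_sub_negPart _)
        clear_value g p q
        have hintg_g : intg g = 1 := by rw [hgdef]; exact intg_pow_dens hP hf N₀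
        have hintα : intg hstar = α := by rw [← norm_intg hstar_LF.1, hstar_norm]
        have hpnorm : ‖p‖ = 1 - α + ‖q‖ := by
          rw [norm_intg hp_nn, hpq, intg_add, intg_sub, hintg_g, hintα,
            norm_intg hqnn]
        have hppos : 0 < ‖p‖ := by
          have : (0:ℝ) ≤ ‖q‖ := norm_nonneg _
          rw [hpnorm]; linarith
        set u := ‖p‖⁻¹ • p with hudef
        have hu_d : IsDensity m u := by
          constructor
          · rw [hudef]; exact smul_nn (inv_nonneg.2 hppos.le) hp_nn
          · rw [hudef, norm_smul, Real.norm_eq_abs, abs_of_pos (inv_pos.2 hppos),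
              inv_mul_cancel₀ hppos.ne']
        have hpu : p = ‖p‖ • u := by
          rw [hudef]
          exact (smul_inv_smul₀ hppos.ne' p).symm
        clear_value u
        obtain ⟨K, hK⟩ := eps_of_tendsto0 (hstar_LF.2 u hu_d) (ε/8) (by linarith)
        refine ⟨N₀ + K, fun n hn => ?_⟩
        set k := n - N₀ with hkdef
        clear_value k
        have hkK : K ≤ k := by omega
        have hnk : n = N₀ + k := by omega
        set rk := ((P ^ k) u - hstar)⁻ with hrkdef
        have hrknn : (0 : Lp ℝ 1 m) ≤ rk := negPart_nonneg _
        have hrk : ‖rk‖ ≤ ε/8 := hK k hkK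
        have hrkle : hstar - (P ^ k) u ≤ rk := by
          have := neg_le_negPart ((P ^ k) u - hstar)
          rwa [neg_sub] at this
        clear_value rk
        have hPkp : (P ^ k) p = ‖p‖ • ((P ^ k) u) := by
          conv_lhs => rw [hpu, _root_.map_smul]
        have hPmf : (P ^ n) f = hstar + (P ^ k) p - (P ^ k) q := by
          have e1 : (P ^ n) f = (P ^ k) g := by
            rw [hnk, add_comm N₀ k, pow_add, ContinuousLinearMap.mul_apply, hgdef]
          rw [e1, hgid, map_sub, map_add, hfixn k]
        have hw1 : (0 : Lp ℝ 1 m) ≤ ‖p‖ • rk + (P ^ k) q :=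
          add_nonneg (smul_nn hppos.le hrknn) ((stoch_pow hP k).1 q hqnn)
        have hmain : ((P ^ n) f - c • hstar)⁻ ≤ ‖p‖ • rk + (P ^ k) q := by
          refine negPart_le' ?_ hw1
          rw [neg_sub, hPmf]
          have key : c • hstar - hstar - (P ^ k) p ≤ ‖p‖ • rk := by
            have e1 : c • hstar - hstar = (1 - α) • hstar := by
              calc c • hstar - hstar = c • hstar - (1:ℝ) • hstar := by rw [one_smul]
                _ = (c - 1) • hstar := (sub_smul _ _ _).symm
                _ = (1 - α) • hstar := by rw [show c - 1 = 1 - α by rw [hc]; ring]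
            rw [e1, hPkp]
            have h3 : hstar - (P ^ k) u ≤ rk := hrkle
            calc (1 - α) • hstar - ‖p‖ • ((P ^ k) u)
                ≤ ‖p‖ • hstar - ‖p‖ • ((P ^ k) u) :=
                  sub_le_sub_right
                    (smul_mono_r (by rw [hpnorm]; have := norm_nonneg q; linarith)
                      hstar_LF.1) _
              _ = ‖p‖ • (hstar - (P ^ k) u) := (smul_sub _ _ _).symm
              _ ≤ ‖p‖ • rk := smul_mono_left hppos.le h3
          calc c • hstar - (hstar + (P ^ k) p - (P ^ k) q)
              = (c • hstar - hstar - (P ^ k) p) + (P ^ k) q := by abel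
            _ ≤ ‖p‖ • rk + (P ^ k) q := add_le_add key le_rfl
        have hPkq : ‖(P ^ k) q‖ = ‖q‖ := by
          rw [norm_intg ((stoch_pow hP k).1 q hqnn), intg_pow hP,
            ← norm_intg hqnn]
        have hnorm1 : ‖((P ^ n) f - c • hstar)⁻‖ ≤ ‖p‖ * ‖rk‖ + ‖q‖ := by
          calc ‖((P ^ n) f - c • hstar)⁻‖ ≤ ‖‖p‖ • rk + (P ^ k) q‖ :=
                norm_mono' (negPart_nonneg _) hmain
            _ ≤ ‖‖p‖ • rk‖ + ‖(P ^ k) q‖ := norm_add_le _ _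
            _ = ‖p‖ * ‖rk‖ + ‖q‖ := by
                rw [norm_smul, Real.norm_eq_abs, abs_of_pos hppos, hPkq]
        have hple2 : ‖p‖ ≤ 2 := by
          have h4 : ‖q‖ ≤ 1 := le_trans hqε (min_le_right _ _)
          rw [hpnorm]; linarith
        have hq4 : ‖q‖ ≤ ε/4 := le_trans hqε (min_le_left _ _)
        have h5 : ‖p‖ * ‖rk‖ ≤ 2 * (ε/8) :=
          mul_le_mul hple2 hrk (norm_nonneg _) (by norm_num)
        calc ‖((P ^ n) f - c • hstar)⁻‖ ≤ ‖p‖ * ‖rk‖ + ‖q‖ := hnorm1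
          _ ≤ 2 * (ε/8) + ε/4 := add_le_add h5 hq4
          _ ≤ ε := by linarith
      have hcontra := hαle _ hC
      rw [norm_smul, Real.norm_eq_abs, abs_of_pos (by rw [hc]; linarith : (0:ℝ) < c),
        hstar_norm] at hcontra
      rw [hc] at hcontra
      nlinarith
    -- conclusion
    refine ⟨hstar, ⟨hstar_LF.1, by rw [hstar_norm, hα_eq]⟩, fun f hf => ?_⟩
    have key : ∀ n : ℕ, ‖(P ^ n) f - hstar‖ = 2 * ‖((P ^ n) f - hstar)⁻‖ := by
      intro n
      rw [norm_eq_intg_add, intg_sub, intg_pow_dens hP hf n]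
      rw [← norm_intg hstar_LF.1, hstar_norm, hα_eq]
      ring
    have h2 := (hstar_LF.2 f hf).const_mul (2:ℝ)
    rw [mul_zero] at h2
    exact h2.congr fun n => (key n).symm
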